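/- For the marginal sums, if C_x ∩ C_y ≠ ∅ then Cov(g°_{x(C_x)}, g°_{y(C_y)}) = 2^{−|C_x|/2 − |C_y|/2} ∑_{A ⊆ C_x ∩ C_y, A ≠ ∅} ∏_{j∈A}(-1)^{x[j]+y[j]} (1 + (α/(1-α))(1-ρ_A))^{-1}. -/

import Mathlib

open Finset MeasureTheory ProbabilityTheory
open Real Set Filter Topology NNReal ENNReal

lemma aux_integrable_sq_exp :
    Integrable (fun x : ℝ => x ^ 2 * Real.exp (-(2⁻¹ : ℝ) * x ^ 2)) := by
  have h := integrable_rpow_mul_exp_neg_mul_sq (by norm_num : (0:ℝ) < 2⁻¹)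
    (s := 2) (by norm_num)
  have : ∀ x : ℝ, x ^ (2:ℝ) = x ^ (2:ℕ) := fun x => by
    rw [← Real.rpow_natCast x 2]; norm_num
  simpa [this] using h

lemma aux_integral_sq_mul_exp :
    ∫ x : ℝ, x ^ 2 * Real.exp (-(2⁻¹ : ℝ) * x ^ 2) = Real.sqrt (2 * Real.pi) := by
  have hint2 := aux_integrable_sq_exp
  have hint0 : Integrable (fun x : ℝ => Real.exp (-(2⁻¹:ℝ) * x ^ 2)) :=
    integrable_exp_neg_mul_sq (by norm_num)
  set F : ℝ → ℝ := fun x => -x * Real.exp (-(2⁻¹:ℝ) * x ^ 2) with hF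
  have hderiv : ∀ x : ℝ, HasDerivAt F
      (x ^ 2 * Real.exp (-(2⁻¹:ℝ) * x ^ 2) - Real.exp (-(2⁻¹:ℝ) * x ^ 2)) x := by
    intro x
    have h1 : HasDerivAt (fun x : ℝ => -(2⁻¹:ℝ) * x ^ 2) (-(2⁻¹:ℝ) * (2 * x)) x := by
      simpa [mul_comm] using (hasDerivAt_pow 2 x).const_mul (-(2⁻¹:ℝ))
    have h3 := ((hasDerivAt_id x).neg).mul h1.exp
    refine h3.congr_deriv ?_
    simp only [Pi.neg_apply, id_eq]
    ring
  have hlim1 : Tendsto (fun x : ℝ => x * Real.exp (-(2⁻¹:ℝ) * x ^ 2)) atTop (𝓝 0) := by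
    have hlo := rpow_mul_exp_neg_mul_sq_isLittleO_exp_neg (by norm_num : (0:ℝ) < 2⁻¹) 1
    have hexp : Tendsto (fun x : ℝ => Real.exp (-(1/2) * x)) atTop (𝓝 0) := by
      have h := Real.tendsto_exp_neg_atTop_nhds_zero.comp
        (tendsto_id.const_mul_atTop (by norm_num : (0:ℝ) < 1/2))
      simpa [Function.comp_def, neg_mul] using h
    have := hlo.isBigO.trans_tendsto hexp
    simpa [Real.rpow_one] using this
  have hlimTop : Tendsto F atTop (𝓝 0) := by
    have := hlim1.neg
    simpa [F, neg_mul] using this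
  have hlimBot : Tendsto F atBot (𝓝 0) := by
    have := hlim1.comp tendsto_neg_atBot_atTop
    simpa [F, Function.comp_def, neg_sq] using this
  have hsub : Integrable (fun x : ℝ =>
      x ^ 2 * Real.exp (-(2⁻¹:ℝ) * x ^ 2) - Real.exp (-(2⁻¹:ℝ) * x ^ 2)) := hint2.sub hint0
  have hIic : ∫ x in Iic (0:ℝ),
      (x ^ 2 * Real.exp (-(2⁻¹:ℝ) * x ^ 2) - Real.exp (-(2⁻¹:ℝ) * x ^ 2)) = F 0 - 0 :=
    integral_Iic_of_hasDerivAt_of_tendsto' (fun x _ => hderiv x) hsub.integrableOn hlimBot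
  have hIoi : ∫ x in Ioi (0:ℝ),
      (x ^ 2 * Real.exp (-(2⁻¹:ℝ) * x ^ 2) - Real.exp (-(2⁻¹:ℝ) * x ^ 2)) = 0 - F 0 :=
    integral_Ioi_of_hasDerivAt_of_tendsto' (fun x _ => hderiv x) hsub.integrableOn hlimTop
  have htot : ∫ x : ℝ,
      (x ^ 2 * Real.exp (-(2⁻¹:ℝ) * x ^ 2) - Real.exp (-(2⁻¹:ℝ) * x ^ 2)) = 0 := by
    rw [← intervalIntegral.integral_Iic_add_Ioi hsub.integrableOn hsub.integrableOn, hIic, hIoi]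
    ring
  have hgauss : ∫ x : ℝ, Real.exp (-(2⁻¹:ℝ) * x ^ 2) = Real.sqrt (2 * Real.pi) := by
    rw [integral_gaussian]
    rw [show (Real.pi/2⁻¹ : ℝ) = 2*Real.pi by rw [div_eq_mul_inv, inv_inv, mul_comm]]
  rw [integral_sub hint2 hint0, hgauss] at htot
  linarith

lemma aux_integral_id_mul_exp :
    ∫ x : ℝ, x * Real.exp (-(2⁻¹ : ℝ) * x ^ 2) = 0 := by
  have h := integral_neg_eq_self (fun x : ℝ => x * Real.exp (-(2⁻¹:ℝ) * x ^ 2))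
    (volume : Measure ℝ)
  simp only [neg_sq, neg_mul] at h
  rw [integral_neg] at h
  simp only [neg_mul]
  linarith

lemma aux_pdf (x : ℝ) :
    gaussianPDFReal 0 1 x = (Real.sqrt (2 * Real.pi))⁻¹ * Real.exp (-(2⁻¹:ℝ) * x ^ 2) := by
  rw [gaussianPDFReal]
  norm_num
  exact Or.inl (by ring)

lemma aux_gaussianPDF_eq :
    gaussianPDF 0 1 = fun x => ((gaussianPDFReal 0 1 x).toNNReal : ℝ≥0∞) := rfl

lemma aux_integral_gaussianReal (f : ℝ → ℝ) :
    ∫ x, f x ∂(gaussianReal 0 1) = ∫ x, gaussianPDFReal 0 1 x * f x := by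
  rw [gaussianReal_of_var_ne_zero 0 one_ne_zero, aux_gaussianPDF_eq,
    integral_withDensity_eq_integral_smul ((measurable_gaussianPDFReal 0 1).real_toNNReal) f]
  refine integral_congr_ae (Eventually.of_forall fun x => ?_)
  simp [NNReal.smul_def, Real.coe_toNNReal _ (gaussianPDFReal_nonneg 0 1 x)]

lemma aux_memℒp_of_gauss {Ω : Type*} [MeasurableSpace Ω] {μ : Measure Ω}
    {X : Ω → ℝ} (hm : Measurable X) (hl : Measure.map X μ = gaussianReal 0 1) :
    MemLp X 2 μ := by
  have hid : MemLp (fun x : ℝ => x) 2 (gaussianReal 0 1) := by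
    rw [memLp_two_iff_integrable_sq measurable_id'.aestronglyMeasurable,
      gaussianReal_of_var_ne_zero 0 one_ne_zero, aux_gaussianPDF_eq,
      integrable_withDensity_iff_integrable_smul
        ((measurable_gaussianPDFReal 0 1).real_toNNReal)]
    refine (aux_integrable_sq_exp.const_mul ((Real.sqrt (2 * Real.pi))⁻¹)).congr
      (Eventually.of_forall fun x => ?_)
    simp only []
    rw [NNReal.smul_def, Real.coe_toNNReal _ (gaussianPDFReal_nonneg 0 1 x), aux_pdf,
      smul_eq_mul]
    ring
  have h := (memLp_map_measure_iff (p := 2) (g := fun x : ℝ => x)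
    (by rw [hl]; exact aestronglyMeasurable_id) hm.aemeasurable).mp (by rwa [hl])
  exact h

lemma aux_mean_of_gauss {Ω : Type*} [MeasurableSpace Ω] {μ : Measure Ω}
    {X : Ω → ℝ} (hm : Measurable X) (hl : Measure.map X μ = gaussianReal 0 1) :
    ∫ ω, X ω ∂μ = 0 := by
  have h := integral_map (φ := X) (f := fun x : ℝ => x) hm.aemeasurable
    (by rw [hl]; exact aestronglyMeasurable_id)
  rw [hl, aux_integral_gaussianReal] at h
  rw [← h]
  have heq : (fun x : ℝ => gaussianPDFReal 0 1 x * x)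
      = fun x => (Real.sqrt (2 * Real.pi))⁻¹ * (x * Real.exp (-(2⁻¹:ℝ) * x ^ 2)) := by
    funext x; rw [aux_pdf]; ring
  rw [heq, integral_const_mul, aux_integral_id_mul_exp, mul_zero]

lemma aux_sq_of_gauss {Ω : Type*} [MeasurableSpace Ω] {μ : Measure Ω}
    {X : Ω → ℝ} (hm : Measurable X) (hl : Measure.map X μ = gaussianReal 0 1) :
    ∫ ω, X ω * X ω ∂μ = 1 := by
  have h := integral_map (φ := X) (f := fun x : ℝ => x * x) hm.aemeasurable
    (by rw [hl]; exact (measurable_id.mul measurable_id).aestronglyMeasurable)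
  rw [hl, aux_integral_gaussianReal] at h
  rw [← h]
  have heq : (fun x : ℝ => gaussianPDFReal 0 1 x * (x * x))
      = fun x => (Real.sqrt (2 * Real.pi))⁻¹ * (x ^ 2 * Real.exp (-(2⁻¹:ℝ) * x ^ 2)) := by
    funext x; rw [aux_pdf]; ring
  rw [heq, integral_const_mul, aux_integral_sq_mul_exp,
    inv_mul_cancel₀ (Real.sqrt_ne_zero'.mpr (by positivity))]

lemma aux_main {Ω : Type*} [MeasurableSpace Ω] {μ : Measure Ω} [IsProbabilityMeasure μ]
    {ι : Type*} [DecidableEq ι] (g : ι → Ω → ℝ)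
    (hgmeas : ∀ A, Measurable (g A))
    (hglaw : ∀ A, Measure.map (g A) μ = gaussianReal 0 1)
    (hgindep : iIndepFun g μ)
    (S1 S2 : Finset ι) (a b : ι → ℝ) :
    ∫ ω, (∑ A ∈ S1, a A * g A ω) * (∑ B ∈ S2, b B * g B ω) ∂μ
      = ∑ A ∈ S1 ∩ S2, a A * b A := by
  have hL2 : ∀ A : ι, MemLp (g A) 2 μ :=
    fun A => aux_memℒp_of_gauss (hgmeas A) (hglaw A)
  have hmulint : ∀ A B : ι, Integrable (fun ω => g A ω * g B ω) μ := by
    intro A B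
    have h := ((hL2 B).smul (hL2 A) (p := 2) (q := 2) (r := 1))
    have h2 := memLp_one_iff_integrable.mp h
    exact h2.congr (Eventually.of_forall fun ω => by simp [smul_eq_mul])
  have hI : ∀ A B : ι, (∫ ω, g A ω * g B ω ∂μ) = if A = B then 1 else 0 := by
    intro A B
    by_cases h : A = B
    · subst h; rw [if_pos rfl]; exact aux_sq_of_gauss (hgmeas A) (hglaw A)
    · rw [if_neg h]
      have hind : IndepFun (g A) (g B) μ := hgindep.indepFun h
      have hh := hind.integral_mul_eq_mul_integral (hgmeas A).aestronglyMeasurable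
        (hgmeas B).aestronglyMeasurable
      calc ∫ ω, g A ω * g B ω ∂μ = (∫ ω, g A ω ∂μ) * ∫ ω, g B ω ∂μ := hh
        _ = 0 := by rw [aux_mean_of_gauss (hgmeas A) (hglaw A), zero_mul]
  calc ∫ ω, (∑ A ∈ S1, a A * g A ω) * (∑ B ∈ S2, b B * g B ω) ∂μ
      = ∫ ω, ∑ A ∈ S1, ∑ B ∈ S2, (a A * b B) * (g A ω * g B ω) ∂μ := by
        refine integral_congr_ae (Eventually.of_forall fun ω => ?_)
        simp only []
        rw [Finset.sum_mul_sum]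
        exact Finset.sum_congr rfl fun A _ => Finset.sum_congr rfl fun B _ => by ring
    _ = ∑ A ∈ S1, ∑ B ∈ S2, (a A * b B) * ∫ ω, g A ω * g B ω ∂μ := by
        rw [integral_finset_sum _
          (fun A _ => integrable_finset_sum _ fun B _ => ((hmulint A B).const_mul _))]
        refine Finset.sum_congr rfl fun A _ => ?_
        rw [integral_finset_sum _ (fun B _ => (hmulint A B).const_mul _)]
        exact Finset.sum_congr rfl fun B _ => integral_const_mul _ _
    _ = ∑ A ∈ S1, ∑ B ∈ S2, if A = B then a A * b B else 0 := by
        refine Finset.sum_congr rfl fun A _ => Finset.sum_congr rfl fun B _ => ?_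
        rw [hI A B]
        by_cases h : A = B <;> simp [h]
    _ = ∑ A ∈ S1, if A ∈ S2 then a A * b A else 0 := by
        refine Finset.sum_congr rfl fun A _ => ?_
        exact Finset.sum_ite_eq S2 A (fun B => a A * b B)
    _ = ∑ A ∈ S1 ∩ S2, a A * b A := Finset.sum_ite_mem S1 S2 _

/-- for the marginal sums
`g°_{x(C)} = 2^{-|C|/2} ∑_{∅≠A⊆C} ∏_{j∈A}(-1)^{x[j]} (1+(α/(1-α))(1-ρ_A))^{-1/2} g_A`,
if `C_x ∩ C_y ≠ ∅` then
`Cov(g°_{x(C_x)}, g°_{y(C_y)}) = 2^{-|C_x|/2-|C_y|/2} ∑_{∅≠A⊆C_x∩C_y}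
∏_{j∈A}(-1)^{x[j]+y[j]} (1+(α/(1-α))(1-ρ_A))⁻¹`. -/
theorem centered_marginal_covariance
    (N : ℕ) (hN : 0 < N) (α : ℝ) (hα : α ∈ Set.Ioo (0 : ℝ) 1)
    (ρ : Finset (Fin N) → ℝ) (hρ : ∀ A, ρ A ∈ Set.Icc (-1 : ℝ) 1)
    {Ω : Type*} [MeasurableSpace Ω] (μ : Measure Ω) [IsProbabilityMeasure μ]
    (g : Finset (Fin N) → Ω → ℝ)
    (hgmeas : ∀ A, Measurable (g A))
    (hglaw : ∀ A, Measure.map (g A) μ = gaussianReal 0 1)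
    (hgindep : iIndepFun g μ)
    (gm : (Fin N → ZMod 2) → Finset (Fin N) → Ω → ℝ)
    (hgm : ∀ x C ω, gm x C ω = (2 : ℝ) ^ (-((C.card : ℝ)) / 2) *
      ∑ A ∈ C.powerset.filter (· ≠ ∅),
        (∏ j ∈ A, (-1 : ℝ) ^ ((x j).val)) *
          (Real.sqrt (1 + (α / (1 - α)) * (1 - ρ A)))⁻¹ * g A ω)
    (x y : Fin N → ZMod 2) (Cx Cy : Finset (Fin N)) (hC : Cx ∩ Cy ≠ ∅) :
    ∫ ω, gm x Cx ω * gm y Cy ω ∂μ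
      = (2 : ℝ) ^ (-((Cx.card : ℝ)) / 2 - ((Cy.card : ℝ)) / 2) *
        ∑ A ∈ (Cx ∩ Cy).powerset.filter (· ≠ ∅),
          (∏ j ∈ A, (-1 : ℝ) ^ ((x j).val + (y j).val)) *
            (1 + (α / (1 - α)) * (1 - ρ A))⁻¹ := by
  classical
  set S1 := Cx.powerset.filter (· ≠ ∅) with hS1
  set S2 := Cy.powerset.filter (· ≠ ∅) with hS2
  set a : Finset (Fin N) → ℝ := fun A =>
    (∏ j ∈ A, (-1 : ℝ) ^ ((x j).val)) *
      (Real.sqrt (1 + (α / (1 - α)) * (1 - ρ A)))⁻¹ with ha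
  set b : Finset (Fin N) → ℝ := fun A =>
    (∏ j ∈ A, (-1 : ℝ) ^ ((y j).val)) *
      (Real.sqrt (1 + (α / (1 - α)) * (1 - ρ A)))⁻¹ with hb
  have hcore := aux_main g hgmeas hglaw hgindep S1 S2 a b
  have hinter : S1 ∩ S2 = (Cx ∩ Cy).powerset.filter (· ≠ ∅) := by
    ext A
    simp only [hS1, hS2, Finset.mem_inter, Finset.mem_filter, Finset.mem_powerset,
      Finset.subset_inter_iff]
    tauto
  have ht : ∀ A : Finset (Fin N), 0 ≤ 1 + (α / (1 - α)) * (1 - ρ A) := by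
    intro A
    have h1 : 0 ≤ α / (1 - α) := div_nonneg hα.1.le (by linarith [hα.2])
    have h2 : 0 ≤ 1 - ρ A := by linarith [(hρ A).2]
    nlinarith
  have hpt : ∀ ω, gm x Cx ω * gm y Cy ω
      = ((2 : ℝ) ^ (-((Cx.card : ℝ)) / 2) * (2 : ℝ) ^ (-((Cy.card : ℝ)) / 2)) *
        ((∑ A ∈ S1, a A * g A ω) * (∑ B ∈ S2, b B * g B ω)) := by
    intro ω
    rw [hgm, hgm, mul_mul_mul_comm]
  calc ∫ ω, gm x Cx ω * gm y Cy ω ∂μ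
      = ∫ ω, ((2 : ℝ) ^ (-((Cx.card : ℝ)) / 2) * (2 : ℝ) ^ (-((Cy.card : ℝ)) / 2)) *
          ((∑ A ∈ S1, a A * g A ω) * (∑ B ∈ S2, b B * g B ω)) ∂μ :=
        integral_congr_ae (Eventually.of_forall hpt)
    _ = ((2 : ℝ) ^ (-((Cx.card : ℝ)) / 2) * (2 : ℝ) ^ (-((Cy.card : ℝ)) / 2)) *
          ∫ ω, (∑ A ∈ S1, a A * g A ω) * (∑ B ∈ S2, b B * g B ω) ∂μ :=
        integral_const_mul _ _
    _ = ((2 : ℝ) ^ (-((Cx.card : ℝ)) / 2) * (2 : ℝ) ^ (-((Cy.card : ℝ)) / 2)) *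
          ∑ A ∈ S1 ∩ S2, a A * b A := by rw [hcore]
    _ = (2 : ℝ) ^ (-((Cx.card : ℝ)) / 2 - ((Cy.card : ℝ)) / 2) *
        ∑ A ∈ (Cx ∩ Cy).powerset.filter (· ≠ ∅),
          (∏ j ∈ A, (-1 : ℝ) ^ ((x j).val + (y j).val)) *
            (1 + (α / (1 - α)) * (1 - ρ A))⁻¹ := by
        rw [hinter]
        congr 1
        · rw [← Real.rpow_add (by norm_num : (0:ℝ) < 2)]
          congr 1
          ring
        · refine Finset.sum_congr rfl fun A _ => ?_
          have hs : Real.sqrt (1 + (α / (1 - α)) * (1 - ρ A)) *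
              Real.sqrt (1 + (α / (1 - α)) * (1 - ρ A))
              = 1 + (α / (1 - α)) * (1 - ρ A) := Real.mul_self_sqrt (ht A)
          have hprod : (∏ j ∈ A, (-1 : ℝ) ^ ((x j).val)) *
              (∏ j ∈ A, (-1 : ℝ) ^ ((y j).val))
              = ∏ j ∈ A, (-1 : ℝ) ^ ((x j).val + (y j).val) := by
            rw [← Finset.prod_mul_distrib]
            exact Finset.prod_congr rfl fun j _ => (pow_add _ _ _).symm
          rw [ha, hb]
          simp only []
          rw [show (∏ j ∈ A, (-1 : ℝ) ^ ((x j).val)) *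
              (Real.sqrt (1 + (α / (1 - α)) * (1 - ρ A)))⁻¹ *
              ((∏ j ∈ A, (-1 : ℝ) ^ ((y j).val)) *
                (Real.sqrt (1 + (α / (1 - α)) * (1 - ρ A)))⁻¹)
              = ((∏ j ∈ A, (-1 : ℝ) ^ ((x j).val)) *
                  (∏ j ∈ A, (-1 : ℝ) ^ ((y j).val))) *
                (Real.sqrt (1 + (α / (1 - α)) * (1 - ρ A)) *
                  Real.sqrt (1 + (α / (1 - α)) * (1 - ρ A)))⁻¹ by
            rw [mul_inv]; ring]
          rw [hs, hprod]
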